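/- Fix N ≥ 2, complex numbers p₁, …, p_N, pairwise distinct complex numbers τ₁, …, τ_N, and η ∈ ℂ with η ≠ 0. For indices i₁ < … < i_j from {1, …, N}, let M_{i₁,…,i_j}(u) be the j×j matrix with (a,c) entry τ_{i_a}^{c−1}·(η^{j+1−2c}u − p_{i_a}), and let M⁰_{i₁,…,i_j} be the j×j matrix with (a,c) entry τ_{i_a}^{c−1}. Define Q₀(u) = 1, Q_j(u) = det M_{1,…,j}(u)/det M⁰_{1,…,j} for 1 ≤ j ≤ N, and Q̃_j(u) = det M_{1,…,j−1,j+1}(u)/det M⁰_{1,…,j−1,j+1} for 1 ≤ j ≤ N−1. Then each Q_j is a monic polynomial of degree j in u, and for every 1 ≤ j ≤ N−1 and every u ∈ ℂ one has τ_{j+1}·Q_j(ηu)·Q̃_j(η⁻¹u) − τ_j·Q_j(η⁻¹u)·Q̃_j(ηu) = (τ_{j+1} − τ_j)·Q_{j−1}(u)·Q_{j+1}(u). -/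

import Mathlib

open Matrix Polynomial Finset



/-- The j×j matrix `M_{s(1),…,s(j)}(u)` with (a,c) entry
`τ_{s a}^{c-1} (η^{j+1-2c} u − p_{s a})` (here `c` is 0-indexed). -/
noncomputable def rsM {N : ℕ} (p τ : Fin N → ℂ) (η u : ℂ) {j : ℕ} (s : Fin j → Fin N) :
    Matrix (Fin j) (Fin j) ℂ :=
  Matrix.of fun a c => τ (s a) ^ (c : ℕ) * (η ^ ((j : ℤ) - 1 - 2 * (c : ℕ)) * u - p (s a))

/-- The Vandermonde-type matrix `M⁰_{s(1),…,s(j)}` with (a,c) entry `τ_{s a}^{c-1}`. -/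
noncomputable def rsM0 {N : ℕ} (τ : Fin N → ℂ) {j : ℕ} (s : Fin j → Fin N) :
    Matrix (Fin j) (Fin j) ℂ :=
  Matrix.of fun a c => τ (s a) ^ (c : ℕ)

/-- Row selection `{1,…,j}` (0-indexed: `{0,…,j-1}`). -/
def selQ {N : ℕ} (j : ℕ) (h : j ≤ N) : Fin j → Fin N :=
  fun a => ⟨a, lt_of_lt_of_le a.2 h⟩

/-- Row selection `{1,…,j-1, j+1}` (0-indexed: `{0,…,j-2, j}`). -/
def selQt {N : ℕ} (j : ℕ) (h : j < N) : Fin j → Fin N :=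
  fun a => if (a : ℕ) = j - 1 then ⟨j, h⟩ else ⟨a, lt_trans a.2 h⟩

/-- `Q_j(u) = det M_{1,…,j}(u) / det M⁰_{1,…,j}`. -/
noncomputable def Qdet {N : ℕ} (p τ : Fin N → ℂ) (η : ℂ) (j : ℕ) (h : j ≤ N) (u : ℂ) : ℂ :=
  (rsM p τ η u (selQ j h)).det / (rsM0 τ (selQ j h)).det

/-- `Q̃_j(u) = det M_{1,…,j-1,j+1}(u) / det M⁰_{1,…,j-1,j+1}`. -/
noncomputable def Qtdet {N : ℕ} (p τ : Fin N → ℂ) (η : ℂ) (j : ℕ) (h : j < N) (u : ℂ) : ℂ :=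
  (rsM p τ η u (selQt j h)).det / (rsM0 τ (selQt j h)).det



/-- Cramer-type identity: alternating sum of maximal minors times coordinates vanishes. -/
lemma cramerRows (n : ℕ) (v : Fin (n+1) → Fin n → ℂ) (c : Fin n) :
    ∑ i : Fin (n+1), (-1:ℂ)^(i:ℕ) *
      (Matrix.of fun a b => v (i.succAbove a) b : Matrix (Fin n) (Fin n) ℂ).det * v i c = 0 := by
  have h0 : (Matrix.of (fun k (l : Fin (n+1)) => (Fin.cons (v k c) (v k) : Fin (n+1) → ℂ) l) :
      Matrix (Fin (n+1)) (Fin (n+1)) ℂ).det = 0 := by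
    apply Matrix.det_zero_of_column_eq (i := (0 : Fin (n+1))) (j := c.succ)
    · exact (Fin.succ_ne_zero c).symm
    · intro k; simp
  rw [Matrix.det_succ_column_zero] at h0
  rw [← h0]
  apply Finset.sum_congr rfl
  intro i _
  have hsub : ((Matrix.of (fun k (l : Fin (n+1)) => (Fin.cons (v k c) (v k) : Fin (n+1) → ℂ) l) :
      Matrix (Fin (n+1)) (Fin (n+1)) ℂ).submatrix i.succAbove Fin.succ) =
      (Matrix.of fun a b => v (i.succAbove a) b) := by
    ext a b; simp [Matrix.submatrix_apply]
  rw [hsub]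
  simp [Matrix.of_apply]
  ring


lemma of_snoc_eq_updateRow {k : ℕ} (U : Fin k → Fin (k+1) → ℂ) (x y : Fin (k+1) → ℂ) :
    (Matrix.of (Fin.snoc U x) : Matrix (Fin (k+1)) (Fin (k+1)) ℂ) =
      (Matrix.of (Fin.snoc U y) : Matrix (Fin (k+1)) (Fin (k+1)) ℂ).updateRow (Fin.last k) x := by
  ext r l
  refine Fin.lastCases ?_ (fun s => ?_) r
  · simp
  · rw [Matrix.updateRow_ne (Fin.ne_of_lt (Fin.castSucc_lt_last s))]
    simp

/-- `x ↦ det (U₁,…,U_k, x)` as a linear map. -/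
noncomputable def detSnoc (k : ℕ) (U : Fin k → Fin (k+1) → ℂ) : (Fin (k+1) → ℂ) →ₗ[ℂ] ℂ where
  toFun x := (Matrix.of (Fin.snoc U x) : Matrix (Fin (k+1)) (Fin (k+1)) ℂ).det
  map_add' x y := by
    show (Matrix.of (Fin.snoc U (x+y))).det = (Matrix.of (Fin.snoc U x)).det + (Matrix.of (Fin.snoc U y)).det
    rw [of_snoc_eq_updateRow U (x + y) 0, Matrix.det_updateRow_add,
      ← of_snoc_eq_updateRow U x 0, ← of_snoc_eq_updateRow U y 0]
  map_smul' r x := by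
    show (Matrix.of (Fin.snoc U (r • x))).det = r • (Matrix.of (Fin.snoc U x)).det
    rw [of_snoc_eq_updateRow U (r • x) 0, Matrix.det_updateRow_smul,
      ← of_snoc_eq_updateRow U x 0]
    rfl

@[simp] lemma detSnoc_apply (k : ℕ) (U : Fin k → Fin (k+1) → ℂ) (x : Fin (k+1) → ℂ) :
    detSnoc k U x = (Matrix.of (Fin.snoc U x) : Matrix (Fin (k+1)) (Fin (k+1)) ℂ).det := rfl

lemma comp_succAbove_one {α : Type*} {k : ℕ} (g : Fin k → α) (x y : α) :
    (Fin.snoc (Fin.snoc g x) y : Fin (k+2) → α) ∘ (Fin.castSucc (Fin.last k)).succAbove =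
      (Fin.snoc g y : Fin (k+1) → α) := by
  funext t
  refine Fin.lastCases ?_ (fun s => ?_) t
  · rw [Function.comp_apply, Fin.succAbove_of_le_castSucc _ _ (le_refl _), Fin.succ_last]
    simp
  · rw [Function.comp_apply, Fin.succAbove_of_castSucc_lt _ _
      (by exact_mod_cast Fin.castSucc_lt_castSucc_iff.mpr (Fin.castSucc_lt_last s))]
    simp

lemma comp_succAbove_two {α : Type*} {k : ℕ} (g : Fin k → α) (x y z : α) :
    (Fin.snoc (Fin.snoc (Fin.snoc g x) y) z : Fin (k+3) → α) ∘
        (Fin.castSucc (Fin.castSucc (Fin.last k))).succAbove =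
      (Fin.snoc (Fin.snoc g y) z : Fin (k+2) → α) := by
  funext t
  refine Fin.lastCases ?_ (fun s => ?_) t
  · rw [Function.comp_apply, Fin.succAbove_of_le_castSucc _ _
      (by simp [Fin.le_def]), Fin.succ_last]
    simp
  · refine Fin.lastCases ?_ (fun r => ?_) s
    · rw [Function.comp_apply, Fin.succAbove_of_le_castSucc _ _ (le_refl _),
        Fin.succ_castSucc, Fin.succ_last]
      simp
    · rw [Function.comp_apply, Fin.succAbove_of_castSucc_lt _ _
        (by simp [Fin.lt_def])]
      simp
lemma pluecker3 (m : ℕ) (ws : Fin m → Fin (m+2) → ℂ) (a b c d : Fin (m+2) → ℂ) :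
    (-1:ℂ)^m * (Matrix.of (Fin.snoc (Fin.snoc ws b) c) : Matrix (Fin (m+2)) (Fin (m+2)) ℂ).det *
        (Matrix.of (Fin.snoc (Fin.snoc ws d) a) : Matrix (Fin (m+2)) (Fin (m+2)) ℂ).det
      + (-1:ℂ)^(m+1) * (Matrix.of (Fin.snoc (Fin.snoc ws a) c) : Matrix (Fin (m+2)) (Fin (m+2)) ℂ).det *
        (Matrix.of (Fin.snoc (Fin.snoc ws d) b) : Matrix (Fin (m+2)) (Fin (m+2)) ℂ).det
      + (-1:ℂ)^(m+2) * (Matrix.of (Fin.snoc (Fin.snoc ws a) b) : Matrix (Fin (m+2)) (Fin (m+2)) ℂ).det *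
        (Matrix.of (Fin.snoc (Fin.snoc ws d) c) : Matrix (Fin (m+2)) (Fin (m+2)) ℂ).det = 0 := by
  set v : Fin (m+3) → Fin (m+2) → ℂ := Fin.snoc (Fin.snoc (Fin.snoc ws a) b) c with hv
  set L : (Fin (m+2) → ℂ) →ₗ[ℂ] ℂ := detSnoc (m+1) (Fin.snoc ws d) with hL
  set g : Fin (m+3) → ℂ := fun i =>
    (-1:ℂ)^(i:ℕ) * (Matrix.of fun r l => v (i.succAbove r) l : Matrix (Fin (m+2)) (Fin (m+2)) ℂ).det
    with hg
  have key : ∑ i : Fin (m+3), g i * L (v i) = 0 := by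
    have h1 : ∀ i : Fin (m+3), g i * L (v i) = L (g i • v i) := by
      intro i; rw [L.map_smul]; simp [smul_eq_mul]
    simp_rw [h1]
    rw [← map_sum]
    have h2 : (∑ i : Fin (m+3), g i • v i) = 0 := by
      funext col
      have := cramerRows (m+2) v col
      simpa [Finset.sum_apply, hg, mul_assoc] using this
    rw [h2, map_zero]
  rw [Fin.sum_univ_castSucc, Fin.sum_univ_castSucc, Fin.sum_univ_castSucc] at key
  have hz : ∀ i : Fin m, g (Fin.castSucc (Fin.castSucc (Fin.castSucc i))) *
      L (v (Fin.castSucc (Fin.castSucc (Fin.castSucc i)))) = 0 := by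
    intro i
    have hvi : v (Fin.castSucc (Fin.castSucc (Fin.castSucc i))) = ws i := by
      simp [hv]
    rw [hvi]
    have : L (ws i) = 0 := by
      rw [hL, detSnoc_apply]
      apply Matrix.det_zero_of_row_eq (i := Fin.castSucc (Fin.castSucc i)) (j := Fin.last (m+1))
      · exact Fin.ne_of_lt (by simp [Fin.lt_def])
      · show (Fin.snoc (Fin.snoc ws d) (ws i) : Fin (m+2) → Fin (m+2) → ℂ) _ =
          (Fin.snoc (Fin.snoc ws d) (ws i) : Fin (m+2) → Fin (m+2) → ℂ) _
        simp
    rw [this, mul_zero]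
  rw [Finset.sum_eq_zero (fun i _ => hz i), zero_add] at key
  -- identify the three surviving terms
  have e1 : v (Fin.castSucc (Fin.castSucc (Fin.last m))) = a := by simp [hv]
  have e2 : v (Fin.castSucc (Fin.last (m+1))) = b := by simp [hv]
  have e3 : v (Fin.last (m+2)) = c := by simp [hv]
  have m1 : (Matrix.of fun r l => v ((Fin.castSucc (Fin.castSucc (Fin.last m))).succAbove r) l :
      Matrix (Fin (m+2)) (Fin (m+2)) ℂ) = Matrix.of (Fin.snoc (Fin.snoc ws b) c) := by
    have := comp_succAbove_two (k := m) ws a b c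
    ext r l; exact congrFun (congrFun this r) l
  have m2 : (Matrix.of fun r l => v ((Fin.castSucc (Fin.last (m+1))).succAbove r) l :
      Matrix (Fin (m+2)) (Fin (m+2)) ℂ) = Matrix.of (Fin.snoc (Fin.snoc ws a) c) := by
    have := comp_succAbove_one (k := m+1) (Fin.snoc ws a) b c
    ext r l; exact congrFun (congrFun this r) l
  have m3 : (Matrix.of fun r l => v ((Fin.last (m+2)).succAbove r) l :
      Matrix (Fin (m+2)) (Fin (m+2)) ℂ) = Matrix.of (Fin.snoc (Fin.snoc ws a) b) := by
    ext r l; rw [Fin.succAbove_last]; simp [hv]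
  have hg1 : g (Fin.castSucc (Fin.castSucc (Fin.last m))) =
      (-1:ℂ)^m * (Matrix.of (Fin.snoc (Fin.snoc ws b) c) : Matrix (Fin (m+2)) (Fin (m+2)) ℂ).det := by
    rw [hg]; simp only [m1]; norm_num
  have hg2 : g (Fin.castSucc (Fin.last (m+1))) =
      (-1:ℂ)^(m+1) * (Matrix.of (Fin.snoc (Fin.snoc ws a) c) : Matrix (Fin (m+2)) (Fin (m+2)) ℂ).det := by
    rw [hg]; simp only [m2]; norm_num
  have hg3 : g (Fin.last (m+2)) =
      (-1:ℂ)^(m+2) * (Matrix.of (Fin.snoc (Fin.snoc ws a) b) : Matrix (Fin (m+2)) (Fin (m+2)) ℂ).det := by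
    rw [hg]; simp only [m3]; norm_num
  rw [hg1, hg2, hg3, e1, e2, e3] at key
  simp only [hL, detSnoc_apply] at key
  exact key


lemma det_snoc_basis (k : ℕ) (U : Fin k → Fin (k+1) → ℂ) (mc : Fin (k+1)) :
    (Matrix.of (Fin.snoc U (fun l => if l = mc then (1:ℂ) else 0)) :
        Matrix (Fin (k+1)) (Fin (k+1)) ℂ).det =
      (-1:ℂ)^(k+(mc:ℕ)) *
        (Matrix.of (fun a b => U a (mc.succAbove b)) : Matrix (Fin k) (Fin k) ℂ).det := by
  rw [Matrix.det_succ_row _ (Fin.last k)]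
  rw [Finset.sum_eq_single mc]
  · have h1 : (Matrix.of (Fin.snoc U (fun l => if l = mc then (1:ℂ) else 0)) :
        Matrix (Fin (k+1)) (Fin (k+1)) ℂ) (Fin.last k) mc = 1 := by simp
    have h2 : ((Matrix.of (Fin.snoc U (fun l => if l = mc then (1:ℂ) else 0)) :
        Matrix (Fin (k+1)) (Fin (k+1)) ℂ).submatrix (Fin.last k).succAbove mc.succAbove) =
        (Matrix.of (fun a b => U a (mc.succAbove b)) : Matrix (Fin k) (Fin k) ℂ) := by
      ext r l
      simp [Matrix.submatrix_apply, Fin.succAbove_last]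
    rw [h1, h2, mul_one]
    simp
  · intro j _ hj
    have : (Matrix.of (Fin.snoc U (fun l => if l = mc then (1:ℂ) else 0)) :
        Matrix (Fin (k+1)) (Fin (k+1)) ℂ) (Fin.last k) j = 0 := by simp [hj]
    rw [this]; ring
  · intro h; exact absurd (Finset.mem_univ mc) h
lemma star (N m : ℕ) (hlt : m+1 < N) (h1 : m+1 ≤ N) (h2 : m+2 ≤ N) (hm : m ≤ N)
    (p τ : Fin N → ℂ) (η : ℂ) (hη : η ≠ 0) (u : ℂ) :
    (∏ r : Fin m, τ (selQ m hm r)) *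
      (τ ⟨m+1, hlt⟩ * (rsM p τ η (η*u) (selQ (m+1) h1)).det *
          (rsM p τ η (η⁻¹*u) (selQt (m+1) hlt)).det
        - τ ⟨m, lt_of_le_of_lt (Nat.le_succ m) hlt⟩ * (rsM p τ η (η⁻¹*u) (selQ (m+1) h1)).det *
          (rsM p τ η (η*u) (selQt (m+1) hlt)).det
        - (rsM p τ η u (selQ m hm)).det * (rsM p τ η u (selQ (m+2) h2)).det) = 0 := by
  set W : Fin N → Fin (m+2) → ℂ :=
    fun i cc => τ i ^ (cc:ℕ) * (η ^ (((m:ℤ)+1) - 2*(cc:ℕ)) * u - p i) with hW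
  set ws : Fin m → Fin (m+2) → ℂ := fun r => W (selQ m hm r) with hws
  set wa : Fin (m+2) → ℂ := W ⟨m, lt_of_le_of_lt (Nat.le_succ m) hlt⟩ with hwa
  set wb : Fin (m+2) → ℂ := W ⟨m+1, hlt⟩ with hwb
  set ec : Fin (m+2) → ℂ := fun l => if l = (0 : Fin (m+2)) then (1:ℂ) else 0 with hec
  set ed : Fin (m+2) → ℂ := fun l => if l = Fin.last (m+1) then (1:ℂ) else 0 with hed
  -- column entry lemmas
  have hcol_cast : ∀ (i : Fin N) (l : Fin (m+1)),
      W i (Fin.castSucc l) = τ i ^ (l:ℕ) * (η ^ (((m+1:ℕ):ℤ)-1-2*(l:ℕ)) * (η*u) - p i) := by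
    intro i l
    have he : ((m:ℤ)+1) - 2*((Fin.castSucc l : Fin (m+2)):ℕ) =
        ((((m+1:ℕ):ℤ)-1-2*(l:ℕ)) + 1) := by
      simp [Fin.coe_castSucc]; push_cast; ring
    rw [hW]; simp only []
    rw [he, zpow_add_one₀ hη, Fin.coe_castSucc]
    ring
  have hcol_succ : ∀ (i : Fin N) (l : Fin (m+1)),
      W i (Fin.succ l) = τ i * (τ i ^ (l:ℕ) * (η ^ (((m+1:ℕ):ℤ)-1-2*(l:ℕ)) * (η⁻¹*u) - p i)) := by
    intro i l
    have he : ((m:ℤ)+1) - 2*((Fin.succ l : Fin (m+2)):ℕ) =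
        ((((m+1:ℕ):ℤ)-1-2*(l:ℕ)) - 1) := by
      simp [Fin.val_succ]; push_cast; ring
    rw [hW]; simp only []
    rw [he, zpow_sub_one₀ hη, Fin.val_succ, pow_succ]
    ring
  have hcol_succcast : ∀ (i : Fin N) (l : Fin m),
      W i (Fin.succ (Fin.castSucc l)) = τ i * (τ i ^ (l:ℕ) * (η ^ (((m:ℕ):ℤ)-1-2*(l:ℕ)) * u - p i)) := by
    intro i l
    have he : ((m:ℤ)+1) - 2*((Fin.succ (Fin.castSucc l) : Fin (m+2)):ℕ) =
        (((m:ℕ):ℤ)-1-2*(l:ℕ)) := by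
      simp [Fin.val_succ, Fin.coe_castSucc]; push_cast; ring
    rw [hW]; simp only []
    rw [he, Fin.val_succ, Fin.coe_castSucc, pow_succ]
    ring
  -- row identifications
  have hrowsQ : (Fin.snoc ws wa : Fin (m+1) → Fin (m+2) → ℂ) =
      fun r => W (selQ (m+1) h1 r) := by
    funext r
    refine Fin.lastCases ?_ (fun s => ?_) r
    · rw [Fin.snoc_last]; rfl
    · rw [Fin.snoc_castSucc]; rfl
  have hrowsQt : (Fin.snoc ws wb : Fin (m+1) → Fin (m+2) → ℂ) =
      fun r => W (selQt (m+1) hlt r) := by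
    funext r
    refine Fin.lastCases ?_ (fun s => ?_) r
    · rw [Fin.snoc_last]
      have : selQt (m+1) hlt (Fin.last m) = ⟨m+1, hlt⟩ := by
        simp [selQt, Fin.val_last]
      rw [this]
    · rw [Fin.snoc_castSucc]
      have : selQt (m+1) hlt (Fin.castSucc s) = ⟨(s:ℕ), lt_of_lt_of_le (lt_of_lt_of_le s.2 (Nat.le_succ m)) h1⟩ := by
        simp only [selQt]
        rw [if_neg (by simp [Fin.coe_castSucc]; omega)]
        exact Fin.ext (by simp)
      rw [this]; rfl
  have hrowsP : (Fin.snoc (Fin.snoc ws wa) wb : Fin (m+2) → Fin (m+2) → ℂ) =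
      fun r => W (selQ (m+2) h2 r) := by
    funext r
    refine Fin.lastCases ?_ (fun s => ?_) r
    · rw [Fin.snoc_last]; rfl
    · rw [Fin.snoc_castSucc, congrFun hrowsQ s]; rfl
  -- six determinant evaluations
  have hDab : (Matrix.of (Fin.snoc (Fin.snoc ws wa) wb) : Matrix (Fin (m+2)) (Fin (m+2)) ℂ).det
      = (rsM p τ η u (selQ (m+2) h2)).det := by
    congr 1
    ext r l
    rw [Matrix.of_apply, congrFun hrowsP r]
    show W (selQ (m+2) h2 r) l = _
    rw [hW]; simp only [rsM, Matrix.of_apply]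
    have : ((m:ℤ)+1) - 2*(l:ℕ) = ((m+2:ℕ):ℤ) - 1 - 2*(l:ℕ) := by push_cast; ring
    rw [this]
  have hDac : (Matrix.of (Fin.snoc (Fin.snoc ws wa) ec) : Matrix (Fin (m+2)) (Fin (m+2)) ℂ).det
      = (-1:ℂ)^(m+1) * ((∏ r : Fin (m+1), τ (selQ (m+1) h1 r)) *
          (rsM p τ η (η⁻¹*u) (selQ (m+1) h1)).det) := by
    rw [hec, det_snoc_basis (m+1) (Fin.snoc ws wa) 0]
    have : (Matrix.of (fun a b => (Fin.snoc ws wa : Fin (m+1) → Fin (m+2) → ℂ) a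
        ((0 : Fin (m+2)).succAbove b)) : Matrix (Fin (m+1)) (Fin (m+1)) ℂ) =
        Matrix.of (fun a b => τ (selQ (m+1) h1 a) * (rsM p τ η (η⁻¹*u) (selQ (m+1) h1)) a b) := by
      ext r l
      rw [Matrix.of_apply, Matrix.of_apply, congrFun hrowsQ r, Fin.succAbove_zero,
        hcol_succ]
      rfl
    rw [this, Matrix.det_mul_column]
    simp
  have hDbc : (Matrix.of (Fin.snoc (Fin.snoc ws wb) ec) : Matrix (Fin (m+2)) (Fin (m+2)) ℂ).det
      = (-1:ℂ)^(m+1) * ((∏ r : Fin (m+1), τ (selQt (m+1) hlt r)) *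
          (rsM p τ η (η⁻¹*u) (selQt (m+1) hlt)).det) := by
    rw [hec, det_snoc_basis (m+1) (Fin.snoc ws wb) 0]
    have : (Matrix.of (fun a b => (Fin.snoc ws wb : Fin (m+1) → Fin (m+2) → ℂ) a
        ((0 : Fin (m+2)).succAbove b)) : Matrix (Fin (m+1)) (Fin (m+1)) ℂ) =
        Matrix.of (fun a b => τ (selQt (m+1) hlt a) * (rsM p τ η (η⁻¹*u) (selQt (m+1) hlt)) a b) := by
      ext r l
      rw [Matrix.of_apply, Matrix.of_apply, congrFun hrowsQt r, Fin.succAbove_zero,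
        hcol_succ]
      rfl
    rw [this, Matrix.det_mul_column]
    simp
  -- swap helper
  have hswap : ∀ x : Fin (m+2) → ℂ,
      (Matrix.of (Fin.snoc (Fin.snoc ws ed) x) : Matrix (Fin (m+2)) (Fin (m+2)) ℂ).det
      = - (Matrix.of (Fin.snoc (Fin.snoc ws x) ed) : Matrix (Fin (m+2)) (Fin (m+2)) ℂ).det := by
    intro x
    set σ : Equiv.Perm (Fin (m+2)) :=
      Equiv.swap (Fin.castSucc (Fin.last m)) (Fin.last (m+1)) with hσ
    have hmat : (Matrix.of (Fin.snoc (Fin.snoc ws ed) x) : Matrix (Fin (m+2)) (Fin (m+2)) ℂ) =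
        (Matrix.of (Fin.snoc (Fin.snoc ws x) ed) : Matrix (Fin (m+2)) (Fin (m+2)) ℂ).submatrix σ id := by
      ext r l
      rw [Matrix.submatrix_apply, id_eq]
      refine Fin.lastCases ?_ (fun s => ?_) r
      · rw [hσ]; simp [Equiv.swap_apply_right]
      · refine Fin.lastCases ?_ (fun t => ?_) s
        · rw [hσ]; simp [Equiv.swap_apply_left]
        · have h1' : Fin.castSucc (Fin.castSucc t) ≠ Fin.castSucc (Fin.last m) := by
            simp [Fin.ext_iff]; omega
          have h2' : Fin.castSucc (Fin.castSucc t) ≠ Fin.last (m+1) := by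
            simp [Fin.ext_iff]; omega
          rw [hσ]; simp [Equiv.swap_apply_of_ne_of_ne h1' h2']
    rw [hmat, Matrix.det_permute]
    have : Equiv.Perm.sign σ = -1 := by
      rw [hσ]; exact Equiv.Perm.sign_swap (by simp [Fin.ext_iff])
    rw [this]
    simp
  have hDda : (Matrix.of (Fin.snoc (Fin.snoc ws ed) wa) : Matrix (Fin (m+2)) (Fin (m+2)) ℂ).det
      = - (rsM p τ η (η*u) (selQ (m+1) h1)).det := by
    rw [hswap wa, hed, det_snoc_basis (m+1) (Fin.snoc ws wa) (Fin.last (m+1))]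
    have : (Matrix.of (fun a b => (Fin.snoc ws wa : Fin (m+1) → Fin (m+2) → ℂ) a
        ((Fin.last (m+1)).succAbove b)) : Matrix (Fin (m+1)) (Fin (m+1)) ℂ) =
        rsM p τ η (η*u) (selQ (m+1) h1) := by
      ext r l
      rw [Matrix.of_apply, congrFun hrowsQ r, Fin.succAbove_last, hcol_cast]
      rfl
    rw [this]
    simp only [Fin.val_last]
    rw [Even.neg_one_pow (⟨m+1, by ring⟩ : Even (m+1+(m+1)))]
    ring
  have hDdb : (Matrix.of (Fin.snoc (Fin.snoc ws ed) wb) : Matrix (Fin (m+2)) (Fin (m+2)) ℂ).det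
      = - (rsM p τ η (η*u) (selQt (m+1) hlt)).det := by
    rw [hswap wb, hed, det_snoc_basis (m+1) (Fin.snoc ws wb) (Fin.last (m+1))]
    have : (Matrix.of (fun a b => (Fin.snoc ws wb : Fin (m+1) → Fin (m+2) → ℂ) a
        ((Fin.last (m+1)).succAbove b)) : Matrix (Fin (m+1)) (Fin (m+1)) ℂ) =
        rsM p τ η (η*u) (selQt (m+1) hlt) := by
      ext r l
      rw [Matrix.of_apply, congrFun hrowsQt r, Fin.succAbove_last, hcol_cast]
      rfl
    rw [this]
    simp only [Fin.val_last]
    rw [Even.neg_one_pow (⟨m+1, by ring⟩ : Even (m+1+(m+1)))]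
    ring
  have hDdc : (Matrix.of (Fin.snoc (Fin.snoc ws ed) ec) : Matrix (Fin (m+2)) (Fin (m+2)) ℂ).det
      = (-1:ℂ)^(m+1) * ((∏ r : Fin m, τ (selQ m hm r)) * (rsM p τ η u (selQ m hm)).det) := by
    rw [hec, det_snoc_basis (m+1) (Fin.snoc ws ed) 0]
    have hstep : (Matrix.of (fun a b => (Fin.snoc ws ed : Fin (m+1) → Fin (m+2) → ℂ) a
        ((0 : Fin (m+2)).succAbove b)) : Matrix (Fin (m+1)) (Fin (m+1)) ℂ) =
        Matrix.of (Fin.snoc (fun (a : Fin m) (b : Fin (m+1)) => ws a (Fin.succ b))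
          (fun l => if l = Fin.last m then (1:ℂ) else 0)) := by
      ext r l
      refine Fin.lastCases ?_ (fun s => ?_) r
      · rw [Matrix.of_apply, Matrix.of_apply, Fin.snoc_last, Fin.snoc_last,
          Fin.succAbove_zero]
        have : (Fin.succ l = Fin.last (m+1)) ↔ (l = Fin.last m) := by
          constructor
          · intro h; exact Fin.succ_injective _ (by rw [h, Fin.succ_last])
          · intro h; rw [h, Fin.succ_last]
        simp [hed, this]
      · rw [Matrix.of_apply, Matrix.of_apply, Fin.snoc_castSucc, Fin.snoc_castSucc,
          Fin.succAbove_zero]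
    rw [hstep, det_snoc_basis m _ (Fin.last m)]
    have hstep2 : (Matrix.of (fun (a : Fin m) (b : Fin m) =>
        ws a (Fin.succ ((Fin.last m).succAbove b))) : Matrix (Fin m) (Fin m) ℂ) =
        Matrix.of (fun a b => τ (selQ m hm a) * (rsM p τ η u (selQ m hm)) a b) := by
      ext r l
      rw [Matrix.of_apply, Matrix.of_apply, Fin.succAbove_last, hws]
      show W (selQ m hm r) (Fin.succ (Fin.castSucc l)) = _
      rw [hcol_succcast]
      rfl
    rw [hstep2, Matrix.det_mul_column]
    simp only [Fin.val_last, Fin.val_zero, add_zero]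
    rw [Even.neg_one_pow (⟨m, by ring⟩ : Even (m+m))]
    ring
  -- assemble
  have key := pluecker3 m ws wa wb ec ed
  rw [hDab, hDac, hDbc, hDda, hDdb, hDdc] at key
  -- product peeling
  have hprodQ : (∏ r : Fin (m+1), τ (selQ (m+1) h1 r)) =
      (∏ r : Fin m, τ (selQ m hm r)) * τ ⟨m, lt_of_le_of_lt (Nat.le_succ m) hlt⟩ := by
    rw [Fin.prod_univ_castSucc]
    rfl
  have hprodQt : (∏ r : Fin (m+1), τ (selQt (m+1) hlt r)) =
      (∏ r : Fin m, τ (selQ m hm r)) * τ ⟨m+1, hlt⟩ := by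
    rw [Fin.prod_univ_castSucc]
    congr 1
    · apply Finset.prod_congr rfl
      intro r _
      congr 1
      simp only [selQt, selQ]
      rw [if_neg (by simp [Fin.coe_castSucc]; omega)]
      exact Fin.ext (by simp)
    · simp [selQt, Fin.val_last]
  rw [hprodQ, hprodQt] at key
  set s : ℂ := (-1:ℂ)^m with hs
  have hpow1 : (-1:ℂ)^(m+1) = -s := by rw [pow_succ]; ring
  have hpow2 : (-1:ℂ)^(m+2) = s := by rw [pow_add]; norm_num; exact hs.symm
  rw [hpow1, hpow2] at key
  have hss : s * s = 1 := by
    rw [hs, ← pow_add]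
    exact Even.neg_one_pow ⟨m, rfl⟩
  set T := (∏ r : Fin m, τ (selQ m hm r))
  set Mqp := (rsM p τ η (η*u) (selQ (m+1) h1)).det
  set Mqm := (rsM p τ η (η⁻¹*u) (selQ (m+1) h1)).det
  set Mtp := (rsM p τ η (η*u) (selQt (m+1) hlt)).det
  set Mtm := (rsM p τ η (η⁻¹*u) (selQt (m+1) hlt)).det
  set Mm := (rsM p τ η u (selQ m hm)).det
  set Mp := (rsM p τ η u (selQ (m+2) h2)).det
  set t1 := τ ⟨m+1, hlt⟩
  set t0 := τ ⟨m, lt_of_le_of_lt (Nat.le_succ m) hlt⟩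
  linear_combination key - (T*(t1*Mqp*Mtm - t0*Mqm*Mtp - Mm*Mp)) * hss

lemma rsM0_eq_vandermonde {N j : ℕ} (τ : Fin N → ℂ) (s : Fin j → Fin N) :
    rsM0 τ s = Matrix.vandermonde (fun a => τ (s a)) := rfl

lemma prod_Ioi_castSucc_split {k : ℕ} (i : Fin k) (g : Fin (k+1) → ℂ) :
    ∏ l ∈ Finset.Ioi (Fin.castSucc i), g l =
      (∏ l ∈ Finset.Ioi i, g (Fin.castSucc l)) * g (Fin.last k) := by
  have hset : Finset.Ioi (Fin.castSucc i) =
      insert (Fin.last k) ((Finset.Ioi i).map Fin.castSuccEmb) := by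
    ext l
    constructor
    · intro hl
      have hl' : (Fin.castSucc i) < l := Finset.mem_Ioi.mp hl
      rcases Fin.eq_castSucc_or_eq_last l with ⟨l0, rfl⟩ | rfl
      · refine Finset.mem_insert_of_mem (Finset.mem_map.mpr ⟨l0, Finset.mem_Ioi.mpr ?_, rfl⟩)
        exact Fin.castSucc_lt_castSucc_iff.mp hl'
      · exact Finset.mem_insert_self _ _
    · intro hl
      rcases Finset.mem_insert.mp hl with rfl | hmem
      · exact Finset.mem_Ioi.mpr (Fin.castSucc_lt_last i)
      · obtain ⟨l0, hl0, rfl⟩ := Finset.mem_map.mp hmem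
        exact Finset.mem_Ioi.mpr (Fin.castSucc_lt_castSucc_iff.mpr (Finset.mem_Ioi.mp hl0))
  rw [hset, Finset.prod_insert, Finset.prod_map]
  · rw [mul_comm]; rfl
  · intro hmem'
    obtain ⟨l0, _, h⟩ := Finset.mem_map.mp hmem'
    exact (Fin.ne_of_lt (Fin.castSucc_lt_last l0)) h

lemma vdm_peel (k : ℕ) (f : Fin (k+1) → ℂ) :
    (∏ i : Fin (k+1), ∏ l ∈ Finset.Ioi i, (f l - f i)) =
      ((∏ i : Fin k, ∏ l ∈ Finset.Ioi i, (f (Fin.castSucc l) - f (Fin.castSucc i))) *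
        ∏ i : Fin k, (f (Fin.last k) - f (Fin.castSucc i))) := by
  rw [Fin.prod_univ_castSucc]
  have hlast : (∏ l ∈ Finset.Ioi (Fin.last k), (f l - f (Fin.last k))) = 1 := by
    apply Finset.prod_eq_one
    intro l hl
    exact absurd (Finset.mem_Ioi.mp hl) (not_lt.mpr (Fin.le_last l))
  rw [hlast, mul_one]
  rw [← Finset.prod_mul_distrib]
  apply Finset.prod_congr rfl
  intro i _
  rw [prod_Ioi_castSucc_split i (fun l => f l - f (Fin.castSucc i))]

lemma vrel (N m : ℕ) (hlt : m+1 < N) (h1 : m+1 ≤ N) (h2 : m+2 ≤ N) (hm : m ≤ N)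
    (τ : Fin N → ℂ) :
    (rsM0 τ (selQ m hm)).det * (rsM0 τ (selQ (m+2) h2)).det =
      (τ ⟨m+1, hlt⟩ - τ ⟨m, lt_of_le_of_lt (Nat.le_succ m) hlt⟩) *
        ((rsM0 τ (selQ (m+1) h1)).det * (rsM0 τ (selQt (m+1) hlt)).det) := by
  rw [rsM0_eq_vandermonde, rsM0_eq_vandermonde, rsM0_eq_vandermonde, rsM0_eq_vandermonde,
    Matrix.det_vandermonde, Matrix.det_vandermonde, Matrix.det_vandermonde,
    Matrix.det_vandermonde]
  have hQ2 : ∀ i : Fin (m+1), τ (selQ (m+2) h2 (Fin.castSucc i)) = τ (selQ (m+1) h1 i) := by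
    intro i; exact congrArg τ (Fin.ext (by simp [selQ]))
  have hQ1 : ∀ i : Fin m, τ (selQ (m+1) h1 (Fin.castSucc i)) = τ (selQ m hm i) := by
    intro i; exact congrArg τ (Fin.ext (by simp [selQ]))
  have hQt : ∀ i : Fin m, τ (selQt (m+1) hlt (Fin.castSucc i)) = τ (selQ m hm i) := by
    intro i
    refine congrArg τ ?_
    simp only [selQt, selQ]
    rw [if_neg (by simp [Fin.coe_castSucc]; omega)]
    exact Fin.ext (by simp)
  have hQ2last : τ (selQ (m+2) h2 (Fin.last (m+1))) = τ ⟨m+1, hlt⟩ :=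
    congrArg τ (Fin.ext (by simp [selQ]))
  have hQ1last : τ (selQ (m+1) h1 (Fin.last m)) = τ ⟨m, lt_of_le_of_lt (Nat.le_succ m) hlt⟩ :=
    congrArg τ (Fin.ext (by simp [selQ]))
  have hQtlast : τ (selQt (m+1) hlt (Fin.last m)) = τ ⟨m+1, hlt⟩ :=
    congrArg τ (by simp [selQt])
  rw [vdm_peel (m+1) (fun a => τ (selQ (m+2) h2 a)),
    vdm_peel m (fun a => τ (selQt (m+1) hlt a))]
  simp only [hQ2, hQ1, hQt, hQ2last, hQ1last, hQtlast]
  rw [Fin.prod_univ_castSucc (f := fun i : Fin (m+1) => τ ⟨m+1, hlt⟩ - τ (selQ (m+1) h1 i))]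
  simp only [hQ1, hQ1last]
  ring

noncomputable def DPoly {N : ℕ} (p τ : Fin N → ℂ) (η v : ℂ) {k : ℕ} (s : Fin k → Fin N) :
    Polynomial ℂ :=
  (Matrix.of fun a c => (Polynomial.C (τ (s a)) + Polynomial.X)^(c:ℕ) *
    Polynomial.C (η ^ ((k:ℤ) - 1 - 2*((c:Fin k):ℕ)) * v - p (s a)) :
    Matrix (Fin k) (Fin k) (Polynomial ℂ)).det

lemma DPoly_eval {N : ℕ} (p τ : Fin N → ℂ) (η v : ℂ) {k : ℕ} (s : Fin k → Fin N) (ε : ℂ) :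
    (DPoly p τ η v s).eval ε = (rsM p (fun i => τ i + ε) η v s).det := by
  unfold DPoly
  rw [show (Polynomial.eval ε : Polynomial ℂ → ℂ) = ⇑(Polynomial.evalRingHom ε) from rfl,
    RingHom.map_det]
  congr 1
  ext a c
  simp [Matrix.map_apply, rsM]

lemma selQ_inj {N j : ℕ} (h : j ≤ N) : Function.Injective (selQ j h) := by
  intro a b hab
  have hv := congrArg Fin.val hab
  simp only [selQ] at hv
  exact Fin.ext hv

lemma selQt_inj {N j : ℕ} (h : j < N) : Function.Injective (selQt j h) := by
  intro a b hab
  unfold selQt at hab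
  have haa := a.isLt
  have hbb := b.isLt
  split_ifs at hab with ha hb hb <;>
    exact Fin.ext (by have hv := congrArg Fin.val hab; simp only [] at hv; omega)

lemma rsM0_ne_zero {N j : ℕ} {τ : Fin N → ℂ} (hτ : Function.Injective τ)
    {s : Fin j → Fin N} (hs : Function.Injective s) : (rsM0 τ s).det ≠ 0 := by
  have : rsM0 τ s = Matrix.vandermonde (fun a => τ (s a)) := rfl
  rw [this]
  exact Matrix.det_vandermonde_ne_zero_iff.mpr (hτ.comp hs)

lemma dagger (N m : ℕ) (hlt : m+1 < N) (h1 : m+1 ≤ N) (h2 : m+2 ≤ N) (hm : m ≤ N)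
    (p τ : Fin N → ℂ) (η : ℂ) (hη : η ≠ 0) (u : ℂ) :
    τ ⟨m+1, hlt⟩ * (rsM p τ η (η*u) (selQ (m+1) h1)).det *
        (rsM p τ η (η⁻¹*u) (selQt (m+1) hlt)).det
      - τ ⟨m, lt_of_le_of_lt (Nat.le_succ m) hlt⟩ * (rsM p τ η (η⁻¹*u) (selQ (m+1) h1)).det *
        (rsM p τ η (η*u) (selQt (m+1) hlt)).det
      = (rsM p τ η u (selQ m hm)).det * (rsM p τ η u (selQ (m+2) h2)).det := by
  set P : Polynomial ℂ :=
    (Polynomial.C (τ ⟨m+1, hlt⟩) + Polynomial.X) * DPoly p τ η (η*u) (selQ (m+1) h1) *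
        DPoly p τ η (η⁻¹*u) (selQt (m+1) hlt)
      - (Polynomial.C (τ ⟨m, lt_of_le_of_lt (Nat.le_succ m) hlt⟩) + Polynomial.X) *
        DPoly p τ η (η⁻¹*u) (selQ (m+1) h1) * DPoly p τ η (η*u) (selQt (m+1) hlt)
      - DPoly p τ η u (selQ m hm) * DPoly p τ η u (selQ (m+2) h2) with hP
  have heval : ∀ ε : ℂ, P.eval ε =
      (τ ⟨m+1, hlt⟩ + ε) * (rsM p (fun i => τ i + ε) η (η*u) (selQ (m+1) h1)).det *
          (rsM p (fun i => τ i + ε) η (η⁻¹*u) (selQt (m+1) hlt)).det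
        - (τ ⟨m, lt_of_le_of_lt (Nat.le_succ m) hlt⟩ + ε) *
          (rsM p (fun i => τ i + ε) η (η⁻¹*u) (selQ (m+1) h1)).det *
          (rsM p (fun i => τ i + ε) η (η*u) (selQt (m+1) hlt)).det
        - (rsM p (fun i => τ i + ε) η u (selQ m hm)).det *
          (rsM p (fun i => τ i + ε) η u (selQ (m+2) h2)).det := by
    intro ε
    rw [hP]
    simp [DPoly_eval]
  have hroot : ∀ ε : ℂ, (∀ i : Fin N, τ i + ε ≠ 0) → P.eval ε = 0 := by
    intro ε hne
    have hT : (∏ r : Fin m, (τ (selQ m hm r) + ε)) ≠ 0 :=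
      Finset.prod_ne_zero_iff.mpr (fun r _ => hne _)
    have hstar := star N m hlt h1 h2 hm p (fun i => τ i + ε) η hη u
    rw [heval ε]
    exact (mul_eq_zero.mp hstar).resolve_left hT
  have hPzero : P = 0 := by
    apply Polynomial.eq_zero_of_infinite_isRoot
    have hfin : (Set.range (fun i : Fin N => -τ i)).Finite := Set.finite_range _
    apply Set.Infinite.mono (s := (Set.range (fun i : Fin N => -τ i))ᶜ)
    · intro ε hε
      apply hroot
      intro i hi
      exact hε ⟨i, by linear_combination -hi⟩
    · exact Set.Finite.infinite_compl hfin
  have hτ0 : (fun i : Fin N => τ i + 0) = τ := funext fun i => add_zero _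
  have h0 := heval 0
  rw [hPzero, hτ0] at h0
  simp only [Polynomial.eval_zero] at h0
  linear_combination -h0

lemma prod_zpow_eq (η : ℂ) (hη : η ≠ 0) {ι : Type*} (s : Finset ι) (f : ι → ℤ) :
    ∏ i ∈ s, η ^ f i = η ^ (∑ i ∈ s, f i) := by
  induction s using Finset.cons_induction with
  | empty => simp
  | cons a s ha ih => rw [Finset.prod_cons, Finset.sum_cons, ih, ← zpow_add₀ hη]

lemma expsum (j : ℕ) : ∑ c : Fin j, ((j:ℤ) - 1 - 2*((c:ℕ):ℤ)) = 0 := by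
  induction j with
  | zero => simp
  | succ n ih =>
    rw [Fin.sum_univ_castSucc]
    simp only [Fin.coe_castSucc, Fin.val_last]
    push_cast
    have h : ∑ c : Fin n, (((n:ℤ)+1) - 1 - 2*((c:ℕ):ℤ)) =
        ∑ c : Fin n, (((n:ℤ) - 1 - 2*((c:ℕ):ℤ)) + 1) := by
      apply Finset.sum_congr rfl; intros; ring
    rw [h, Finset.sum_add_distrib, ih]
    simp
    ring

lemma coeff1CC (a b c : ℂ) :
    (Polynomial.C a * (Polynomial.C b * Polynomial.X - Polynomial.C c)).coeff 1 = a * b := by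
  rw [Polynomial.coeff_C_mul, Polynomial.coeff_sub, Polynomial.coeff_C_mul,
    Polynomial.coeff_X_one, Polynomial.coeff_C]
  simp

lemma part1 {N : ℕ} (p τ : Fin N → ℂ) (hτ : Function.Injective τ) (η : ℂ) (hη : η ≠ 0)
    (j : ℕ) (hj : j ≤ N) :
    ∃ R : Polynomial ℂ, R.Monic ∧ R.natDegree = j ∧
      ∀ u : ℂ, Polynomial.eval u R = Qdet p τ η j hj u := by
  set s := selQ j hj with hsdef
  have hsinj : Function.Injective s := by
    intro a b hab
    have hv := congrArg Fin.val hab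
    simp only [hsdef, selQ] at hv
    exact Fin.ext hv
  set V := (rsM0 τ s).det with hV
  have hVne : V ≠ 0 := by
    have : rsM0 τ s = Matrix.vandermonde (fun a => τ (s a)) := rfl
    rw [hV, this]
    exact Matrix.det_vandermonde_ne_zero_iff.mpr (hτ.comp hsinj)
  set Rd : Polynomial ℂ := (Matrix.of (fun a c : Fin j => Polynomial.C (τ (s a) ^ (c:ℕ)) *
      (Polynomial.C (η ^ ((j:ℤ)-1-2*((c:Fin j):ℕ))) * Polynomial.X - Polynomial.C (p (s a)))) :
      Matrix (Fin j) (Fin j) (Polynomial ℂ)).det with hRd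
  have hevalRd : ∀ u : ℂ, Polynomial.eval u Rd = (rsM p τ η u s).det := by
    intro u
    rw [hRd, show (Polynomial.eval u : Polynomial ℂ → ℂ) = ⇑(Polynomial.evalRingHom u) from rfl,
      RingHom.map_det]
    congr 1
    ext a c
    simp [Matrix.map_apply, rsM]
  have hentry_deg : ∀ a c : Fin j, (Polynomial.C (τ (s a) ^ (c:ℕ)) *
      (Polynomial.C (η ^ ((j:ℤ)-1-2*((c:Fin j):ℕ))) * Polynomial.X -
        Polynomial.C (p (s a)))).natDegree ≤ 1 := by
    intro a c
    compute_degree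
  have hdegRd : Rd.natDegree ≤ j := by
    rw [hRd, Matrix.det_apply']
    apply Polynomial.natDegree_sum_le_of_forall_le
    intro σ _
    apply le_trans (Polynomial.natDegree_mul_le)
    rw [Polynomial.natDegree_intCast]
    simp only [zero_add]
    refine le_trans (Polynomial.natDegree_prod_le _ _) ?_
    refine le_trans (Finset.sum_le_sum (g := fun _ => 1) ?_) (by simp)
    intro i _
    simp only [Matrix.of_apply]
    exact hentry_deg (σ i) i
  have hcoeffRd : Rd.coeff j = V := by
    rw [hRd, Matrix.det_apply', Polynomial.finset_sum_coeff]
    have hterm : ∀ σ : Equiv.Perm (Fin j),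
        ((((Equiv.Perm.sign σ : ℤ) : Polynomial ℂ)) * ∏ i : Fin j,
          (Matrix.of (fun a c : Fin j => Polynomial.C (τ (s a) ^ (c:ℕ)) *
            (Polynomial.C (η ^ ((j:ℤ)-1-2*((c:Fin j):ℕ))) * Polynomial.X -
              Polynomial.C (p (s a))))) (σ i) i).coeff j =
        ((Equiv.Perm.sign σ : ℤ) : ℂ) * ∏ i : Fin j, (rsM0 τ s) (σ i) i := by
      intro σ
      rw [show (((Equiv.Perm.sign σ : ℤ) : Polynomial ℂ)) =
        Polynomial.C (((Equiv.Perm.sign σ : ℤ) : ℂ)) from (Polynomial.C_eq_intCast _).symm]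
      rw [Polynomial.coeff_C_mul]
      congr 1
      have hprodc := Polynomial.coeff_prod_of_natDegree_le
        (s := (Finset.univ : Finset (Fin j)))
        (f := fun i => (Matrix.of (fun a c : Fin j => Polynomial.C (τ (s a) ^ (c:ℕ)) *
          (Polynomial.C (η ^ ((j:ℤ)-1-2*((c:Fin j):ℕ))) * Polynomial.X -
            Polynomial.C (p (s a))))) (σ i) i)
        1 (fun i _ => by simp only [Matrix.of_apply]; exact hentry_deg (σ i) i)
      simp only [Finset.card_univ, Fintype.card_fin, mul_one] at hprodc
      rw [hprodc]
      · have : ∀ i : Fin j, ((Matrix.of (fun a c : Fin j => Polynomial.C (τ (s a) ^ (c:ℕ)) *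
            (Polynomial.C (η ^ ((j:ℤ)-1-2*((c:Fin j):ℕ))) * Polynomial.X -
              Polynomial.C (p (s a))))) (σ i) i).coeff 1 =
            η ^ ((j:ℤ)-1-2*((i:Fin j):ℕ)) * (rsM0 τ s) (σ i) i := by
          intro i
          simp only [Matrix.of_apply]
          rw [coeff1CC]
          show _ = _ * (τ (s (σ i)) ^ (i:ℕ))
          ring
        rw [Finset.prod_congr rfl (fun i _ => this i), Finset.prod_mul_distrib,
          prod_zpow_eq η hη, expsum]
        simp
    rw [Finset.sum_congr rfl (fun σ _ => hterm σ), hV, Matrix.det_apply']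
  refine ⟨Polynomial.C V⁻¹ * Rd, ?_, ?_, ?_⟩
  · unfold Polynomial.Monic
    have hc : (Polynomial.C V⁻¹ * Rd).coeff j = 1 := by
      rw [Polynomial.coeff_C_mul, hcoeffRd, inv_mul_cancel₀ hVne]
    have hdeg : (Polynomial.C V⁻¹ * Rd).natDegree ≤ j := by
      apply le_trans (Polynomial.natDegree_mul_le)
      simpa using hdegRd
    have hge : j ≤ (Polynomial.C V⁻¹ * Rd).natDegree := by
      apply Polynomial.le_natDegree_of_ne_zero
      rw [hc]; exact one_ne_zero
    have : (Polynomial.C V⁻¹ * Rd).natDegree = j := le_antisymm hdeg hge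
    rw [Polynomial.leadingCoeff, this, hc]
  · have hc : (Polynomial.C V⁻¹ * Rd).coeff j = 1 := by
      rw [Polynomial.coeff_C_mul, hcoeffRd, inv_mul_cancel₀ hVne]
    have hdeg : (Polynomial.C V⁻¹ * Rd).natDegree ≤ j := by
      apply le_trans (Polynomial.natDegree_mul_le)
      simpa using hdegRd
    have hge : j ≤ (Polynomial.C V⁻¹ * Rd).natDegree := by
      apply Polynomial.le_natDegree_of_ne_zero
      rw [hc]; exact one_ne_zero
    exact le_antisymm hdeg hge
  · intro u
    rw [Polynomial.eval_mul, Polynomial.eval_C, hevalRd u]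
    unfold Qdet
    rw [inv_mul_eq_div]

/-- The determinant formulas solve the QQ̃ functional equations of `T[U(N)]`:
each `Q_j` is a monic polynomial of degree `j`, and the QQ̃ relation
`τ_{j+1} Q_j(ηu) Q̃_j(η⁻¹u) − τ_j Q_j(η⁻¹u) Q̃_j(ηu) = (τ_{j+1} − τ_j) Q_{j-1}(u) Q_{j+1}(u)`
holds for `1 ≤ j ≤ N−1`. -/
theorem QQtilde_determinant_solution (N : ℕ) (hN : 2 ≤ N) (p τ : Fin N → ℂ)
    (hτ : Function.Injective τ) (η : ℂ) (hη : η ≠ 0) :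
    (∀ (j : ℕ) (hj : j ≤ N), ∃ R : Polynomial ℂ, R.Monic ∧ R.natDegree = j ∧
        ∀ u : ℂ, Polynomial.eval u R = Qdet p τ η j hj u) ∧
    (∀ (j : ℕ) (hj1 : 1 ≤ j) (hjN : j + 1 ≤ N) (u : ℂ),
      τ ⟨j, by omega⟩ * Qdet p τ η j (by omega) (η * u) *
          Qtdet p τ η j (by omega) (η⁻¹ * u) -
        τ ⟨j - 1, by omega⟩ * Qdet p τ η j (by omega) (η⁻¹ * u) *
          Qtdet p τ η j (by omega) (η * u) =
      (τ ⟨j, by omega⟩ - τ ⟨j - 1, by omega⟩) * Qdet p τ η (j - 1) (by omega) u *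
        Qdet p τ η (j + 1) (by omega) u) := by
  constructor
  · intro j hj
    exact part1 p τ hτ η hη j hj
  · intro j hj1 hjN u
    obtain ⟨m, rfl⟩ : ∃ m, j = m + 1 := ⟨j - 1, by omega⟩
    have hlt : m+1 < N := by omega
    have h1 : m+1 ≤ N := by omega
    have h2 : m+2 ≤ N := by omega
    have hm : m ≤ N := by omega
    have hVQ : (rsM0 τ (selQ (m+1) h1)).det ≠ 0 := rsM0_ne_zero hτ (selQ_inj h1)
    have hVQt : (rsM0 τ (selQt (m+1) hlt)).det ≠ 0 := rsM0_ne_zero hτ (selQt_inj hlt)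
    have hVm : (rsM0 τ (selQ m hm)).det ≠ 0 := rsM0_ne_zero hτ (selQ_inj hm)
    have hVp : (rsM0 τ (selQ (m+2) h2)).det ≠ 0 := rsM0_ne_zero hτ (selQ_inj h2)
    have hdag := dagger N m hlt h1 h2 hm p τ η hη u
    have hvr := vrel N m hlt h1 h2 hm τ
    have main : τ ⟨m+1, hlt⟩ * Qdet p τ η (m+1) h1 (η*u) * Qtdet p τ η (m+1) hlt (η⁻¹*u)
        - τ ⟨m, lt_of_le_of_lt (Nat.le_succ m) hlt⟩ * Qdet p τ η (m+1) h1 (η⁻¹*u) *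
          Qtdet p τ η (m+1) hlt (η*u)
        = (τ ⟨m+1, hlt⟩ - τ ⟨m, lt_of_le_of_lt (Nat.le_succ m) hlt⟩) *
          Qdet p τ η m hm u * Qdet p τ η (m+2) h2 u := by
      unfold Qdet Qtdet
      simp only [inv_mul_eq_div] at hdag ⊢
      field_simp
      linear_combination ((rsM0 τ (selQ m hm)).det * (rsM0 τ (selQ (m+2) h2)).det) * hdag +
        ((rsM p τ η u (selQ m hm)).det * (rsM p τ η u (selQ (m+2) h2)).det) * hvr
    exact main
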